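/- (Scaling law for transients, μ < 0.) Let α < α* where α*(1-ω) = β, set μ = α - α* < 0. Suppose a solution satisfies ε/β < p(t)Ω(x(t)) < ε/(α(1-ω)) for all t ∈ (τ₀, τ₁), with S(τ₀), S(τ₁), V(τ₀), V(τ₁) > 0. Then both log(S(τ₁)/S(τ₀)) and log(V(τ₀)/V(τ₁)) lie in (0, (ε/α)|μ|(τ₁-τ₀)·(1/1)), and consequently τ₁ - τ₀ > (α/ε)·K̃/|μ|, where K̃ = max{log(V(τ₀)/V(τ₁)), log(S(τ₁)/S(τ₀))} > 0. -/

import Mathlib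

theorem stmt12 (α β γ κ ε εp ω : ℝ)
    (hα : 0 < α) (hβ : 0 < β) (hε : 0 < ε) (hω0 : 0 < ω) (hω1 : ω < 1)
    (hμ : α - β / (1 - ω) < 0)
    (V S D p : ℝ → ℝ)
    (hV : ∀ t, HasDerivAt V (α * (1 - ω) * V t * p t * (1 - V t - S t - D t) - ε * V t) t)
    (hS : ∀ t, HasDerivAt S (β * S t * p t * (1 - V t - S t - D t) - ε * S t) t)
    (τ₀ τ₁ : ℝ) (hττ : τ₀ < τ₁)
    (hpos : ∀ t ∈ Set.Icc τ₀ τ₁, 0 < V t ∧ 0 < S t)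
    (hband : ∀ t ∈ Set.Ioo τ₀ τ₁,
      ε / β < p t * (1 - V t - S t - D t) ∧
      p t * (1 - V t - S t - D t) < ε / (α * (1 - ω))) :
    (0 < Real.log (S τ₁ / S τ₀) ∧
      Real.log (S τ₁ / S τ₀) < ε / α * |α - β / (1 - ω)| * (τ₁ - τ₀)) ∧
    (0 < Real.log (V τ₀ / V τ₁) ∧
      Real.log (V τ₀ / V τ₁) < ε / α * |α - β / (1 - ω)| * (τ₁ - τ₀)) ∧
    τ₁ - τ₀ > α / ε * max (Real.log (V τ₀ / V τ₁)) (Real.log (S τ₁ / S τ₀)) /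
      |α - β / (1 - ω)| := by
  have hω : (0:ℝ) < 1 - ω := by linarith
  have hαω : 0 < α * (1 - ω) := mul_pos hα hω
  have habs : |α - β / (1 - ω)| = β / (1 - ω) - α := by
    rw [abs_of_neg hμ]; ring
  have hA : 0 < |α - β / (1 - ω)| := abs_pos.mpr (ne_of_lt hμ)
  have hβα : α * (1 - ω) < β := by
    rw [sub_neg, lt_div_iff₀ hω] at hμ; linarith
  have hτ : 0 < τ₁ - τ₀ := by linarith
  have hS0 := (hpos τ₀ (Set.left_mem_Icc.mpr hττ.le)).2
  have hS1 := (hpos τ₁ (Set.right_mem_Icc.mpr hττ.le)).2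
  have hV0 := (hpos τ₀ (Set.left_mem_Icc.mpr hττ.le)).1
  have hV1 := (hpos τ₁ (Set.right_mem_Icc.mpr hττ.le)).1
  -- MVT for log S
  have hScont : ContinuousOn (fun t => Real.log (S t)) (Set.Icc τ₀ τ₁) := fun t ht =>
    (((Real.continuousAt_log (ne_of_gt (hpos t ht).2)).comp (hS t).continuousAt)).continuousWithinAt
  have hSlog : ∀ t ∈ Set.Ioo τ₀ τ₁, HasDerivAt (fun t => Real.log (S t))
      (β * (p t * (1 - V t - S t - D t)) - ε) t := by
    intro t ht
    have hst : S t ≠ 0 := ne_of_gt (hpos t (Set.Ioo_subset_Icc_self ht)).2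
    have h := (hS t).log hst
    convert h using 1
    field_simp
  obtain ⟨c, hc, hceq⟩ := exists_hasDerivAt_eq_slope (fun t => Real.log (S t)) _ hττ hScont hSlog
  -- MVT for log V
  have hVcont : ContinuousOn (fun t => Real.log (V t)) (Set.Icc τ₀ τ₁) := fun t ht =>
    (((Real.continuousAt_log (ne_of_gt (hpos t ht).1)).comp (hV t).continuousAt)).continuousWithinAt
  have hVlog : ∀ t ∈ Set.Ioo τ₀ τ₁, HasDerivAt (fun t => Real.log (V t))
      (α * (1 - ω) * (p t * (1 - V t - S t - D t)) - ε) t := by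
    intro t ht
    have hvt : V t ≠ 0 := ne_of_gt (hpos t (Set.Ioo_subset_Icc_self ht)).1
    have h := (hV t).log hvt
    convert h using 1
    field_simp
  obtain ⟨d, hd, hdeq⟩ := exists_hasDerivAt_eq_slope (fun t => Real.log (V t)) _ hττ hVcont hVlog
  obtain ⟨hcl, hcu⟩ := hband c hc
  obtain ⟨hdl, hdu⟩ := hband d hd
  have hlogS : Real.log (S τ₁ / S τ₀) =
      (β * (p c * (1 - V c - S c - D c)) - ε) * (τ₁ - τ₀) := by
    rw [Real.log_div (ne_of_gt hS1) (ne_of_gt hS0), hceq]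
    field_simp
  have hlogV : Real.log (V τ₀ / V τ₁) =
      -((α * (1 - ω) * (p d * (1 - V d - S d - D d)) - ε) * (τ₁ - τ₀)) := by
    rw [Real.log_div (ne_of_gt hV0) (ne_of_gt hV1), hdeq]
    field_simp
    ring
  set Ωc := p c * (1 - V c - S c - D c)
  set Ωd := p d * (1 - V d - S d - D d)
  have hcl' : ε < β * Ωc := by rw [div_lt_iff₀ hβ] at hcl; linarith
  have hcu' : β * Ωc < β * (ε / (α * (1 - ω))) := mul_lt_mul_of_pos_left hcu hβ
  have hbound : β * (ε / (α * (1 - ω))) - ε = ε / α * (β / (1 - ω) - α) := by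
    field_simp
  have hdl' : α * (1 - ω) * (ε / β) < α * (1 - ω) * Ωd := mul_lt_mul_of_pos_left hdl hαω
  have hdu' : α * (1 - ω) * Ωd < ε := by
    have := mul_lt_mul_of_pos_left hdu hαω
    rwa [mul_div_cancel₀ _ (ne_of_gt hαω)] at this
  have hbound2 : ε - α * (1 - ω) * (ε / β) ≤ ε / α * (β / (1 - ω) - α) := by
    have h1 : ε - α * (1 - ω) * (ε / β) = ε * (β - α * (1 - ω)) / β := by
      field_simp
    have h2 : ε / α * (β / (1 - ω) - α) = ε * (β - α * (1 - ω)) / (α * (1 - ω)) := by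
      rw [eq_div_iff (ne_of_gt hαω)]
      field_simp
    rw [h1, h2]
    apply div_le_div_of_nonneg_left _ hαω hβα.le
    have h3 : 0 ≤ β - α * (1 - ω) := by linarith
    positivity
  have hSgoal : 0 < Real.log (S τ₁ / S τ₀) ∧
      Real.log (S τ₁ / S τ₀) < ε / α * |α - β / (1 - ω)| * (τ₁ - τ₀) := by
    constructor
    · rw [hlogS]
      exact mul_pos (by linarith) hτ
    · rw [hlogS, habs]
      have h : β * Ωc - ε < ε / α * (β / (1 - ω) - α) := by linarith
      exact mul_lt_mul_of_pos_right h hτ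
  have hVgoal : 0 < Real.log (V τ₀ / V τ₁) ∧
      Real.log (V τ₀ / V τ₁) < ε / α * |α - β / (1 - ω)| * (τ₁ - τ₀) := by
    constructor
    · rw [hlogV]
      rw [show -((α * (1 - ω) * Ωd - ε) * (τ₁ - τ₀)) = (ε - α * (1 - ω) * Ωd) * (τ₁ - τ₀) from by ring]
      exact mul_pos (by linarith) hτ
    · rw [hlogV, habs]
      have h : ε - α * (1 - ω) * Ωd < ε / α * (β / (1 - ω) - α) := by linarith
      rw [show -((α * (1 - ω) * Ωd - ε) * (τ₁ - τ₀)) = (ε - α * (1 - ω) * Ωd) * (τ₁ - τ₀) from by ring]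
      exact mul_lt_mul_of_pos_right h hτ
  refine ⟨hSgoal, hVgoal, ?_⟩
  set A := |α - β / (1 - ω)|
  set M := max (Real.log (V τ₀ / V τ₁)) (Real.log (S τ₁ / S τ₀))
  have hM : M < ε / α * A * (τ₁ - τ₀) := max_lt hVgoal.2 hSgoal.2
  have h1 : α / ε * M / A < α / ε * (ε / α * A * (τ₁ - τ₀)) / A := by
    gcongr
  calc α / ε * M / A < α / ε * (ε / α * A * (τ₁ - τ₀)) / A := h1
    _ = τ₁ - τ₀ := by field_simp
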